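/- Let F be a finite field with |F| = q ≥ 2 and let p ∈ [0,1] be a real number. With channel failure probability p, the average failure probability over the two sinks of the butterfly network equals the common value of the two sink failure probabilities: P̃_av = (P̃_e(t1) + P̃_e(t2))/2 = 1 − (q+1)(q-1)^6(1−p)^6/q^7, where P̃_e(t_i) is the probability, over independent uniform local encoding coefficients and independent channel successes each of probability 1−p, that the erased decoding matrix at sink t_i is not invertible. -/

import Mathlib

/- Active global encoding kernels of the butterfly network with channel erasures:
`fᵢt` is the usual linear-combination value when the Boolean `eᵢ` (channel `eᵢ`
successful) is true, and the zero vector otherwise. The source kernel is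
`K_s = [[a,c],[b,d]]`, i.e. `f1 = (a,b)ᵀ`, `f2 = (c,d)ᵀ`. -/

def f1t {F : Type*} [Field F] (a b : F) (e1 : Bool) : Fin 2 → F :=
  if e1 then ![a, b] else 0

def f2t {F : Type*} [Field F] (c d : F) (e2 : Bool) : Fin 2 → F :=
  if e2 then ![c, d] else 0

def f3t {F : Type*} [Field F] (a b k13 : F) (e1 e3 : Bool) : Fin 2 → F :=
  if e3 then k13 • f1t a b e1 else 0

def f4t {F : Type*} [Field F] (a b k14 : F) (e1 e4 : Bool) : Fin 2 → F :=
  if e4 then k14 • f1t a b e1 else 0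

def f5t {F : Type*} [Field F] (c d k25 : F) (e2 e5 : Bool) : Fin 2 → F :=
  if e5 then k25 • f2t c d e2 else 0

def f6t {F : Type*} [Field F] (c d k26 : F) (e2 e6 : Bool) : Fin 2 → F :=
  if e6 then k26 • f2t c d e2 else 0

def f7t {F : Type*} [Field F] (a b c d k14 k47 k25 k57 : F) (e1 e2 e4 e5 e7 : Bool) :
    Fin 2 → F :=
  if e7 then k47 • f4t a b k14 e1 e4 + k57 • f5t c d k25 e2 e5 else 0

def f8t {F : Type*} [Field F] (a b c d k14 k47 k78 k25 k57 : F) (e1 e2 e4 e5 e7 e8 : Bool) :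
    Fin 2 → F :=
  if e8 then k78 • f7t a b c d k14 k47 k25 k57 e1 e2 e4 e5 e7 else 0

def f9t {F : Type*} [Field F] (a b c d k14 k47 k79 k25 k57 : F) (e1 e2 e4 e5 e7 e9 : Bool) :
    Fin 2 → F :=
  if e9 then k79 • f7t a b c d k14 k47 k25 k57 e1 e2 e4 e5 e7 else 0

/- The erased decoding matrix at sink `t₁`: columns `f̃3` and `f̃8`. -/
def Ft1t {F : Type*} [Field F] (a b c d k13 k14 k47 k78 k25 k57 : F)
    (e1 e2 e3 e4 e5 e7 e8 : Bool) : Matrix (Fin 2) (Fin 2) F :=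
  !![f3t a b k13 e1 e3 0, f8t a b c d k14 k47 k78 k25 k57 e1 e2 e4 e5 e7 e8 0;
     f3t a b k13 e1 e3 1, f8t a b c d k14 k47 k78 k25 k57 e1 e2 e4 e5 e7 e8 1]

/- The erased decoding matrix at sink `t₂`: columns `f̃6` and `f̃9`. -/
def Ft2t {F : Type*} [Field F] (a b c d k14 k47 k79 k25 k57 k26 : F)
    (e1 e2 e4 e5 e6 e7 e9 : Bool) : Matrix (Fin 2) (Fin 2) F :=
  !![f6t c d k26 e2 e6 0, f9t a b c d k14 k47 k79 k25 k57 e1 e2 e4 e5 e7 e9 0;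
     f6t c d k26 e2 e6 1, f9t a b c d k14 k47 k79 k25 k57 e1 e2 e4 e5 e7 e9 1]

/- The failure probability of sink `t₁` with channel failure probability `p`: the
probability, over independent uniform local encoding coefficients
`(a,b,c,d,k13,k14,k25,k26,k47,k57,k78,k79) ∈ F^12` (encoded as `v 0, …, v 11`) and
independent channel successes `ε1, …, ε9` (encoded as `e 0, …, e 8`), each success
having probability `1 - p`, that the erased decoding matrix `F̃_{t1} = (f̃3 f̃8)` is
not invertible. -/
open Classical in
noncomputable def PeT1 (F : Type*) [Field F] [Fintype F] (p : ℝ) : ℝ :=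
  ∑ v : Fin 12 → F, ∑ e : Fin 9 → Bool,
    if ¬ IsUnit (Ft1t (v 0) (v 1) (v 2) (v 3) (v 4) (v 5) (v 8) (v 10) (v 6) (v 9)
        (e 0) (e 1) (e 2) (e 3) (e 4) (e 6) (e 7)) then
      (1 / (Fintype.card F : ℝ) ^ 12) * ∏ i : Fin 9, (if e i then 1 - p else p)
    else 0

/- The failure probability of sink `t₂` with channel failure probability `p`:
the probability that the erased decoding matrix `F̃_{t2} = (f̃6 f̃9)` is not
invertible. -/
open Classical in
noncomputable def PeT2 (F : Type*) [Field F] [Fintype F] (p : ℝ) : ℝ :=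
  ∑ v : Fin 12 → F, ∑ e : Fin 9 → Bool,
    if ¬ IsUnit (Ft2t (v 0) (v 1) (v 2) (v 3) (v 5) (v 8) (v 11) (v 6) (v 9) (v 7)
        (e 0) (e 1) (e 3) (e 4) (e 5) (e 6) (e 8)) then
      (1 / (Fintype.card F : ℝ) ^ 12) * ∏ i : Fin 9, (if e i then 1 - p else p)
    else 0

open scoped Classical

/-! ### Auxiliary summation lemmas -/

lemma sum_pi_succ {α : Type*} [Fintype α] {n : ℕ} (g : (Fin (n+1) → α) → ℝ) :
    ∑ v : Fin (n+1) → α, g v = ∑ x : α, ∑ w : Fin n → α, g (Fin.cons x w) := by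
  rw [← (Fin.consEquiv (fun _ => α)).sum_comp g, Fintype.sum_prod_type]
  rfl

lemma sum_pi_zero {α : Type*} [Fintype α] (g : (Fin 0 → α) → ℝ) :
    ∑ v : Fin 0 → α, g v = g ![] := by
  rw [Fintype.sum_unique]
  exact congrArg g (Subsingleton.elim _ _)

lemma sum_pi12 {α : Type*} [Fintype α] (g : (Fin 12 → α) → ℝ) :
    ∑ v : Fin 12 → α, g v =
    ∑ x0 : α, ∑ x1 : α, ∑ x2 : α, ∑ x3 : α, ∑ x4 : α, ∑ x5 : α, ∑ x6 : α, ∑ x7 : α,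
    ∑ x8 : α, ∑ x9 : α, ∑ x10 : α, ∑ x11 : α,
      g ![x0,x1,x2,x3,x4,x5,x6,x7,x8,x9,x10,x11] := by
  rw [sum_pi_succ]; refine Finset.sum_congr rfl fun x0 _ => ?_
  rw [sum_pi_succ]; refine Finset.sum_congr rfl fun x1 _ => ?_
  rw [sum_pi_succ]; refine Finset.sum_congr rfl fun x2 _ => ?_
  rw [sum_pi_succ]; refine Finset.sum_congr rfl fun x3 _ => ?_
  rw [sum_pi_succ]; refine Finset.sum_congr rfl fun x4 _ => ?_
  rw [sum_pi_succ]; refine Finset.sum_congr rfl fun x5 _ => ?_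
  rw [sum_pi_succ]; refine Finset.sum_congr rfl fun x6 _ => ?_
  rw [sum_pi_succ]; refine Finset.sum_congr rfl fun x7 _ => ?_
  rw [sum_pi_succ]; refine Finset.sum_congr rfl fun x8 _ => ?_
  rw [sum_pi_succ]; refine Finset.sum_congr rfl fun x9 _ => ?_
  rw [sum_pi_succ]; refine Finset.sum_congr rfl fun x10 _ => ?_
  rw [sum_pi_succ]; refine Finset.sum_congr rfl fun x11 _ => ?_
  rw [sum_pi_zero]; rfl

lemma sum_pi9 {α : Type*} [Fintype α] (g : (Fin 9 → α) → ℝ) :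
    ∑ v : Fin 9 → α, g v =
    ∑ x0 : α, ∑ x1 : α, ∑ x2 : α, ∑ x3 : α, ∑ x4 : α, ∑ x5 : α, ∑ x6 : α, ∑ x7 : α,
    ∑ x8 : α, g ![x0,x1,x2,x3,x4,x5,x6,x7,x8] := by
  rw [sum_pi_succ]; refine Finset.sum_congr rfl fun x0 _ => ?_
  rw [sum_pi_succ]; refine Finset.sum_congr rfl fun x1 _ => ?_
  rw [sum_pi_succ]; refine Finset.sum_congr rfl fun x2 _ => ?_
  rw [sum_pi_succ]; refine Finset.sum_congr rfl fun x3 _ => ?_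
  rw [sum_pi_succ]; refine Finset.sum_congr rfl fun x4 _ => ?_
  rw [sum_pi_succ]; refine Finset.sum_congr rfl fun x5 _ => ?_
  rw [sum_pi_succ]; refine Finset.sum_congr rfl fun x6 _ => ?_
  rw [sum_pi_succ]; refine Finset.sum_congr rfl fun x7 _ => ?_
  rw [sum_pi_succ]; refine Finset.sum_congr rfl fun x8 _ => ?_
  rw [sum_pi_zero]; rfl

lemma prod_univ_nine {M : Type*} [CommMonoid M] (f : Fin 9 → M) :
    ∏ i, f i = f 0 * f 1 * f 2 * f 3 * f 4 * f 5 * f 6 * f 7 * f 8 := by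
  rw [Fin.prod_univ_castSucc, Fin.prod_univ_eight]
  rfl

lemma vecF12_0 {α : Type*} (a0 a1 a2 a3 a4 a5 a6 a7 a8 a9 a10 a11 : α) : (![a0, a1, a2, a3, a4, a5, a6, a7, a8, a9, a10, a11] : Fin 12 → α) 0 = a0 := rfl
lemma vecF12_1 {α : Type*} (a0 a1 a2 a3 a4 a5 a6 a7 a8 a9 a10 a11 : α) : (![a0, a1, a2, a3, a4, a5, a6, a7, a8, a9, a10, a11] : Fin 12 → α) 1 = a1 := rfl
lemma vecF12_2 {α : Type*} (a0 a1 a2 a3 a4 a5 a6 a7 a8 a9 a10 a11 : α) : (![a0, a1, a2, a3, a4, a5, a6, a7, a8, a9, a10, a11] : Fin 12 → α) 2 = a2 := rfl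
lemma vecF12_3 {α : Type*} (a0 a1 a2 a3 a4 a5 a6 a7 a8 a9 a10 a11 : α) : (![a0, a1, a2, a3, a4, a5, a6, a7, a8, a9, a10, a11] : Fin 12 → α) 3 = a3 := rfl
lemma vecF12_4 {α : Type*} (a0 a1 a2 a3 a4 a5 a6 a7 a8 a9 a10 a11 : α) : (![a0, a1, a2, a3, a4, a5, a6, a7, a8, a9, a10, a11] : Fin 12 → α) 4 = a4 := rfl
lemma vecF12_5 {α : Type*} (a0 a1 a2 a3 a4 a5 a6 a7 a8 a9 a10 a11 : α) : (![a0, a1, a2, a3, a4, a5, a6, a7, a8, a9, a10, a11] : Fin 12 → α) 5 = a5 := rfl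
lemma vecF12_6 {α : Type*} (a0 a1 a2 a3 a4 a5 a6 a7 a8 a9 a10 a11 : α) : (![a0, a1, a2, a3, a4, a5, a6, a7, a8, a9, a10, a11] : Fin 12 → α) 6 = a6 := rfl
lemma vecF12_7 {α : Type*} (a0 a1 a2 a3 a4 a5 a6 a7 a8 a9 a10 a11 : α) : (![a0, a1, a2, a3, a4, a5, a6, a7, a8, a9, a10, a11] : Fin 12 → α) 7 = a7 := rfl
lemma vecF12_8 {α : Type*} (a0 a1 a2 a3 a4 a5 a6 a7 a8 a9 a10 a11 : α) : (![a0, a1, a2, a3, a4, a5, a6, a7, a8, a9, a10, a11] : Fin 12 → α) 8 = a8 := rfl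
lemma vecF12_9 {α : Type*} (a0 a1 a2 a3 a4 a5 a6 a7 a8 a9 a10 a11 : α) : (![a0, a1, a2, a3, a4, a5, a6, a7, a8, a9, a10, a11] : Fin 12 → α) 9 = a9 := rfl
lemma vecF12_10 {α : Type*} (a0 a1 a2 a3 a4 a5 a6 a7 a8 a9 a10 a11 : α) : (![a0, a1, a2, a3, a4, a5, a6, a7, a8, a9, a10, a11] : Fin 12 → α) 10 = a10 := rfl
lemma vecF12_11 {α : Type*} (a0 a1 a2 a3 a4 a5 a6 a7 a8 a9 a10 a11 : α) : (![a0, a1, a2, a3, a4, a5, a6, a7, a8, a9, a10, a11] : Fin 12 → α) 11 = a11 := rfl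
lemma vecB9_0 {α : Type*} (b0 b1 b2 b3 b4 b5 b6 b7 b8 : α) : (![b0, b1, b2, b3, b4, b5, b6, b7, b8] : Fin 9 → α) 0 = b0 := rfl
lemma vecB9_1 {α : Type*} (b0 b1 b2 b3 b4 b5 b6 b7 b8 : α) : (![b0, b1, b2, b3, b4, b5, b6, b7, b8] : Fin 9 → α) 1 = b1 := rfl
lemma vecB9_2 {α : Type*} (b0 b1 b2 b3 b4 b5 b6 b7 b8 : α) : (![b0, b1, b2, b3, b4, b5, b6, b7, b8] : Fin 9 → α) 2 = b2 := rfl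
lemma vecB9_3 {α : Type*} (b0 b1 b2 b3 b4 b5 b6 b7 b8 : α) : (![b0, b1, b2, b3, b4, b5, b6, b7, b8] : Fin 9 → α) 3 = b3 := rfl
lemma vecB9_4 {α : Type*} (b0 b1 b2 b3 b4 b5 b6 b7 b8 : α) : (![b0, b1, b2, b3, b4, b5, b6, b7, b8] : Fin 9 → α) 4 = b4 := rfl
lemma vecB9_5 {α : Type*} (b0 b1 b2 b3 b4 b5 b6 b7 b8 : α) : (![b0, b1, b2, b3, b4, b5, b6, b7, b8] : Fin 9 → α) 5 = b5 := rfl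
lemma vecB9_6 {α : Type*} (b0 b1 b2 b3 b4 b5 b6 b7 b8 : α) : (![b0, b1, b2, b3, b4, b5, b6, b7, b8] : Fin 9 → α) 6 = b6 := rfl
lemma vecB9_7 {α : Type*} (b0 b1 b2 b3 b4 b5 b6 b7 b8 : α) : (![b0, b1, b2, b3, b4, b5, b6, b7, b8] : Fin 9 → α) 7 = b7 := rfl
lemma vecB9_8 {α : Type*} (b0 b1 b2 b3 b4 b5 b6 b7 b8 : α) : (![b0, b1, b2, b3, b4, b5, b6, b7, b8] : Fin 9 → α) 8 = b8 := rfl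


/-! ### Scalar building blocks -/

open Classical in
noncomputable def Nfun {F : Type*} [Field F] (x : F) : ℝ := if x ≠ 0 then 1 else 0

open Classical in
noncomputable def Dfun {F : Type*} [Field F] (a b c d : F) : ℝ :=
  if a * d - b * c ≠ 0 then 1 else 0

noncomputable def Wb (p : ℝ) (b : Bool) : ℝ := if b then 1 - p else p
noncomputable def Rb (p : ℝ) (b : Bool) : ℝ := if b then 1 - p else 0

section FieldCounting

variable {F : Type*} [Field F] [Fintype F]

lemma sumF_const (c : ℝ) : ∑ _x : F, c = (Fintype.card F : ℝ) * c := by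
  rw [Finset.sum_const, Finset.card_univ, nsmul_eq_mul]

lemma sumF_ite_zero (X Y : ℝ) :
    ∑ x : F, (if x = 0 then X else Y) = X + ((Fintype.card F : ℝ) - 1) * Y := by
  have h : ∀ x : F, (if x = 0 then X else Y) = Y + (if x = 0 then X - Y else 0) := by
    intro x; by_cases h : x = 0 <;> simp [h]
  rw [Finset.sum_congr rfl fun x _ => h x, Finset.sum_add_distrib, sumF_const,
    Finset.sum_ite_eq' Finset.univ (0 : F) (fun _ => X - Y)]
  simp; ring

lemma sumNfun : ∑ x : F, Nfun x = (Fintype.card F : ℝ) - 1 := by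
  have h : ∀ x : F, Nfun x = (if x = 0 then 0 else 1) := by
    intro x; unfold Nfun; by_cases h : x = 0 <;> simp [h]
  rw [Finset.sum_congr rfl fun x _ => h x, sumF_ite_zero]
  ring

lemma sumF_d (a y : F) :
    ∑ d : F, (if a * d - y ≠ 0 then (1:ℝ) else 0) =
    if a = 0 then (if y = 0 then 0 else (Fintype.card F : ℝ))
    else (Fintype.card F : ℝ) - 1 := by
  have h : ∀ d : F, (if a * d - y ≠ 0 then (1:ℝ) else 0) = 1 - (if a * d = y then 1 else 0) := by
    intro d; by_cases h : a * d = y <;> simp [h, sub_eq_zero]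
  rw [Finset.sum_congr rfl fun d _ => h d, Finset.sum_sub_distrib, sumF_const, mul_one]
  by_cases ha : a = 0
  · by_cases hy : y = 0 <;> simp [ha, hy, sumF_const, eq_comm]
  · have h2 : ∀ d : F, (if a * d = y then (1:ℝ) else 0) = (if d = a⁻¹ * y then 1 else 0) := by
      intro d
      congr 1
      rw [eq_iff_iff]
      constructor
      · intro h; rw [← h]; field_simp
      · intro h; rw [h]; field_simp
    rw [Finset.sum_congr rfl fun d _ => h2 d,
      Finset.sum_ite_eq' Finset.univ (a⁻¹ * y) (fun _ => (1:ℝ))]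
    simp [ha]

lemma detcount :
    ∑ a : F, ∑ b : F, ∑ c : F, ∑ d : F, Dfun a b c d =
    (Fintype.card F : ℝ) * ((Fintype.card F : ℝ) + 1) * ((Fintype.card F : ℝ) - 1) ^ 2 := by
  unfold Dfun
  set q : ℝ := (Fintype.card F : ℝ) with hqdef
  have step1 : ∀ a b : F, ∑ c : F, ∑ d : F, (if a * d - b * c ≠ 0 then (1:ℝ) else 0)
      = if a = 0 then (if b = 0 then 0 else (q - 1) * q) else q * (q - 1) := by
    intro a b
    rw [Finset.sum_congr rfl fun c _ => sumF_d a (b * c)]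
    by_cases ha : a = 0
    · simp only [ha, if_true]
      by_cases hb : b = 0
      · simp [hb]
      · have h : ∀ c : F, (if b * c = 0 then (0:ℝ) else q) = (if c = 0 then 0 else q) := by
          intro c; by_cases hc : c = 0 <;> simp [hb, hc]
        rw [Finset.sum_congr rfl fun c _ => h c, sumF_ite_zero]
        rw [if_neg hb]; ring
    · simp only [ha, if_false]
      rw [sumF_const]
  have step2 : ∀ a : F, ∑ b : F, ∑ c : F, ∑ d : F, (if a * d - b * c ≠ 0 then (1:ℝ) else 0)
      = if a = 0 then q * (q - 1) ^ 2 else q * (q * (q - 1)) := by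
    intro a
    rw [Finset.sum_congr rfl fun b _ => step1 a b]
    by_cases ha : a = 0
    · simp only [ha, if_true]
      rw [sumF_ite_zero]
      ring
    · simp only [ha, if_false]
      rw [sumF_const]
  rw [Finset.sum_congr rfl fun a _ => step2 a, sumF_ite_zero]
  ring

lemma SV1 :
    (∑ a : F, ∑ b : F, ∑ c : F, ∑ d : F, ∑ x4 : F, ∑ x5 : F, ∑ x6 : F, ∑ x7 : F,
      ∑ x8 : F, ∑ x9 : F, ∑ x10 : F, ∑ x11 : F,
      Dfun a b c d * (Nfun x4 * (Nfun x6 * (Nfun x9 * Nfun x10)))) =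
    (Fintype.card F : ℝ) ^ 5 * ((Fintype.card F : ℝ) + 1) * ((Fintype.card F : ℝ) - 1) ^ 6 := by
  simp only [← Finset.mul_sum, ← Finset.sum_mul, sumNfun, sumF_const, detcount]
  ring

lemma SV2 :
    (∑ a : F, ∑ b : F, ∑ c : F, ∑ d : F, ∑ x4 : F, ∑ x5 : F, ∑ x6 : F, ∑ x7 : F,
      ∑ x8 : F, ∑ x9 : F, ∑ x10 : F, ∑ x11 : F,
      Dfun a b c d * (Nfun x5 * (Nfun x7 * (Nfun x8 * Nfun x11)))) =
    (Fintype.card F : ℝ) ^ 5 * ((Fintype.card F : ℝ) + 1) * ((Fintype.card F : ℝ) - 1) ^ 6 := by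
  simp only [← Finset.mul_sum, ← Finset.sum_mul, sumNfun, sumF_const, detcount]
  ring

end FieldCounting

/-! ### Boolean-side summation lemmas -/

lemma sumWb (p : ℝ) : ∑ b : Bool, Wb p b = 1 := by
  rw [Fintype.sum_bool]; unfold Wb; norm_num

lemma sumRb (p : ℝ) : ∑ b : Bool, Rb p b = 1 - p := by
  rw [Fintype.sum_bool]; unfold Rb; norm_num

lemma sumE_all (p : ℝ) :
    ∑ e : Fin 9 → Bool,
      (Wb p (e 0) * Wb p (e 1) * Wb p (e 2) * Wb p (e 3) * Wb p (e 4) * Wb p (e 5) *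
        Wb p (e 6) * Wb p (e 7) * Wb p (e 8)) = 1 := by
  rw [sum_pi9]
  simp only [vecB9_0, vecB9_1, vecB9_2, vecB9_3, vecB9_4, vecB9_5, vecB9_6, vecB9_7, vecB9_8]
  simp only [← Finset.mul_sum, ← Finset.sum_mul, sumWb, mul_one, one_mul]

lemma sumE_t1 (p : ℝ) :
    ∑ e : Fin 9 → Bool,
      (Rb p (e 0) * Rb p (e 1) * Rb p (e 2) * Wb p (e 3) * Rb p (e 4) * Wb p (e 5) *
        Rb p (e 6) * Rb p (e 7) * Wb p (e 8)) = (1 - p) ^ 6 := by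
  rw [sum_pi9]
  simp only [vecB9_0, vecB9_1, vecB9_2, vecB9_3, vecB9_4, vecB9_5, vecB9_6, vecB9_7, vecB9_8]
  simp only [← Finset.mul_sum, ← Finset.sum_mul, sumWb, sumRb, mul_one, one_mul]
  ring

lemma sumE_t2 (p : ℝ) :
    ∑ e : Fin 9 → Bool,
      (Rb p (e 0) * Rb p (e 1) * Wb p (e 2) * Rb p (e 3) * Wb p (e 4) * Rb p (e 5) *
        Rb p (e 6) * Wb p (e 7) * Rb p (e 8)) = (1 - p) ^ 6 := by
  rw [sum_pi9]
  simp only [vecB9_0, vecB9_1, vecB9_2, vecB9_3, vecB9_4, vecB9_5, vecB9_6, vecB9_7, vecB9_8]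
  simp only [← Finset.mul_sum, ← Finset.sum_mul, sumWb, sumRb, mul_one, one_mul]
  ring

/-! ### Determinant characterizations -/

lemma det_t1 {F : Type*} [Field F] (a b c d k13 k14 k47 k78 k25 k57 : F)
    (e1 e2 e3 e4 e5 e7 e8 : Bool) :
    (Ft1t a b c d k13 k14 k47 k78 k25 k57 e1 e2 e3 e4 e5 e7 e8).det =
    if e1 = true ∧ e2 = true ∧ e3 = true ∧ e5 = true ∧ e7 = true ∧ e8 = true then
      k13 * k25 * k57 * k78 * (a * d - b * c) else 0 := by
  rcases e1 <;> rcases e2 <;> rcases e3 <;> rcases e4 <;> rcases e5 <;> rcases e7 <;> rcases e8 <;>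
    simp [Ft1t, f3t, f8t, f7t, f4t, f5t, f1t, f2t, Matrix.det_fin_two_of] <;> ring

lemma det_t2 {F : Type*} [Field F] (a b c d k14 k47 k79 k25 k57 k26 : F)
    (e1 e2 e4 e5 e6 e7 e9 : Bool) :
    (Ft2t a b c d k14 k47 k79 k25 k57 k26 e1 e2 e4 e5 e6 e7 e9).det =
    if e1 = true ∧ e2 = true ∧ e4 = true ∧ e6 = true ∧ e7 = true ∧ e9 = true then
      k26 * k14 * k47 * k79 * (b * c - a * d) else 0 := by
  rcases e1 <;> rcases e2 <;> rcases e4 <;> rcases e5 <;> rcases e6 <;> rcases e7 <;> rcases e9 <;>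
    simp [Ft2t, f6t, f9t, f7t, f4t, f5t, f1t, f2t, Matrix.det_fin_two_of] <;> ring

/-! ### Indicator factors -/

noncomputable def FV1 {F : Type*} [Field F] (v : Fin 12 → F) : ℝ :=
  Dfun (v 0) (v 1) (v 2) (v 3) * (Nfun (v 4) * (Nfun (v 6) * (Nfun (v 9) * Nfun (v 10))))

noncomputable def FV2 {F : Type*} [Field F] (v : Fin 12 → F) : ℝ :=
  Dfun (v 0) (v 1) (v 2) (v 3) * (Nfun (v 5) * (Nfun (v 7) * (Nfun (v 8) * Nfun (v 11))))

noncomputable def GE1 (F : Type*) [Field F] [Fintype F] (p : ℝ) (e : Fin 9 → Bool) : ℝ :=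
  (1 / (Fintype.card F : ℝ) ^ 12) *
    (Rb p (e 0) * Rb p (e 1) * Rb p (e 2) * Wb p (e 3) * Rb p (e 4) * Wb p (e 5) *
      Rb p (e 6) * Rb p (e 7) * Wb p (e 8))

noncomputable def GE2 (F : Type*) [Field F] [Fintype F] (p : ℝ) (e : Fin 9 → Bool) : ℝ :=
  (1 / (Fintype.card F : ℝ) ^ 12) *
    (Rb p (e 0) * Rb p (e 1) * Wb p (e 2) * Rb p (e 3) * Wb p (e 4) * Rb p (e 5) *
      Rb p (e 6) * Wb p (e 7) * Rb p (e 8))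

open Classical in
lemma FV1_eq {F : Type*} [Field F] (v : Fin 12 → F) :
    FV1 v = if (v 0 * v 3 - v 1 * v 2 ≠ 0 ∧ (v 4 ≠ 0 ∧ (v 6 ≠ 0 ∧ (v 9 ≠ 0 ∧ v 10 ≠ 0))))
      then (1:ℝ) else 0 := by
  unfold FV1 Dfun Nfun
  by_cases h0 : v 0 * v 3 - v 1 * v 2 ≠ 0 <;> by_cases h4 : v 4 ≠ 0 <;> by_cases h6 : v 6 ≠ 0 <;>
    by_cases h9 : v 9 ≠ 0 <;> by_cases h10 : v 10 ≠ 0 <;> simp [h0, h4, h6, h9, h10]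

open Classical in
lemma FV2_eq {F : Type*} [Field F] (v : Fin 12 → F) :
    FV2 v = if (v 0 * v 3 - v 1 * v 2 ≠ 0 ∧ (v 5 ≠ 0 ∧ (v 7 ≠ 0 ∧ (v 8 ≠ 0 ∧ v 11 ≠ 0))))
      then (1:ℝ) else 0 := by
  unfold FV2 Dfun Nfun
  by_cases h0 : v 0 * v 3 - v 1 * v 2 ≠ 0 <;> by_cases h5 : v 5 ≠ 0 <;> by_cases h7 : v 7 ≠ 0 <;>
    by_cases h8 : v 8 ≠ 0 <;> by_cases h11 : v 11 ≠ 0 <;> simp [h0, h5, h7, h8, h11]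

open Classical in
lemma bridge1 (p : ℝ) (e : Fin 9 → Bool) :
    (if (e 0 = true ∧ e 1 = true ∧ e 2 = true ∧ e 4 = true ∧ e 6 = true ∧ e 7 = true) then
      Wb p (e 0) * Wb p (e 1) * Wb p (e 2) * Wb p (e 3) * Wb p (e 4) * Wb p (e 5) *
        Wb p (e 6) * Wb p (e 7) * Wb p (e 8) else 0)
    = Rb p (e 0) * Rb p (e 1) * Rb p (e 2) * Wb p (e 3) * Rb p (e 4) * Wb p (e 5) *
        Rb p (e 6) * Rb p (e 7) * Wb p (e 8) := by
  by_cases h0 : e 0 = true <;> by_cases h1 : e 1 = true <;> by_cases h2 : e 2 = true <;>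
    by_cases h4 : e 4 = true <;> by_cases h6 : e 6 = true <;> by_cases h7 : e 7 = true <;>
    simp_all [Wb, Rb, Bool.not_eq_true]

open Classical in
lemma bridge2 (p : ℝ) (e : Fin 9 → Bool) :
    (if (e 0 = true ∧ e 1 = true ∧ e 3 = true ∧ e 5 = true ∧ e 6 = true ∧ e 8 = true) then
      Wb p (e 0) * Wb p (e 1) * Wb p (e 2) * Wb p (e 3) * Wb p (e 4) * Wb p (e 5) *
        Wb p (e 6) * Wb p (e 7) * Wb p (e 8) else 0)
    = Rb p (e 0) * Rb p (e 1) * Wb p (e 2) * Rb p (e 3) * Wb p (e 4) * Rb p (e 5) *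
        Rb p (e 6) * Wb p (e 7) * Rb p (e 8) := by
  by_cases h0 : e 0 = true <;> by_cases h1 : e 1 = true <;> by_cases h3 : e 3 = true <;>
    by_cases h5 : e 5 = true <;> by_cases h6 : e 6 = true <;> by_cases h8 : e 8 = true <;>
    simp_all [Wb, Rb, Bool.not_eq_true]

/-! ### Pointwise rewrites of the summands -/

open Classical in
lemma pw1 {F : Type*} [Field F] [Fintype F] (p : ℝ) (v : Fin 12 → F) (e : Fin 9 → Bool) :
    (if ¬ IsUnit (Ft1t (v 0) (v 1) (v 2) (v 3) (v 4) (v 5) (v 8) (v 10) (v 6) (v 9)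
        (e 0) (e 1) (e 2) (e 3) (e 4) (e 6) (e 7)) then
      (1 / (Fintype.card F : ℝ) ^ 12) * ∏ i : Fin 9, (if e i then 1 - p else p)
    else 0)
    = (1 / (Fintype.card F : ℝ) ^ 12) * ∏ i : Fin 9, (if e i then 1 - p else p)
      - FV1 v * GE1 F p e := by
  have hW : (∏ i : Fin 9, (if e i then 1 - p else p)) =
      Wb p (e 0) * Wb p (e 1) * Wb p (e 2) * Wb p (e 3) * Wb p (e 4) * Wb p (e 5) *
        Wb p (e 6) * Wb p (e 7) * Wb p (e 8) := prod_univ_nine _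
  have hU : IsUnit (Ft1t (v 0) (v 1) (v 2) (v 3) (v 4) (v 5) (v 8) (v 10) (v 6) (v 9)
      (e 0) (e 1) (e 2) (e 3) (e 4) (e 6) (e 7)) ↔
      ((e 0 = true ∧ e 1 = true ∧ e 2 = true ∧ e 4 = true ∧ e 6 = true ∧ e 7 = true) ∧
        (v 0 * v 3 - v 1 * v 2 ≠ 0 ∧ (v 4 ≠ 0 ∧ (v 6 ≠ 0 ∧ (v 9 ≠ 0 ∧ v 10 ≠ 0))))) := by
    rw [Matrix.isUnit_iff_isUnit_det, det_t1, isUnit_iff_ne_zero]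
    by_cases hc : (e 0 = true ∧ e 1 = true ∧ e 2 = true ∧ e 4 = true ∧ e 6 = true ∧ e 7 = true)
    · simp only [hc, if_true, true_and, mul_ne_zero_iff]
      tauto
    · simp [hc]
  rw [hW, FV1_eq]
  simp only [GE1]
  rw [← bridge1 p e]
  simp only [hU]
  by_cases hc : (e 0 = true ∧ e 1 = true ∧ e 2 = true ∧ e 4 = true ∧ e 6 = true ∧ e 7 = true) <;>
    by_cases hv : (v 0 * v 3 - v 1 * v 2 ≠ 0 ∧ (v 4 ≠ 0 ∧ (v 6 ≠ 0 ∧ (v 9 ≠ 0 ∧ v 10 ≠ 0)))) <;>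
    simp [hc, hv] <;> ring

open Classical in
lemma pw2 {F : Type*} [Field F] [Fintype F] (p : ℝ) (v : Fin 12 → F) (e : Fin 9 → Bool) :
    (if ¬ IsUnit (Ft2t (v 0) (v 1) (v 2) (v 3) (v 5) (v 8) (v 11) (v 6) (v 9) (v 7)
        (e 0) (e 1) (e 3) (e 4) (e 5) (e 6) (e 8)) then
      (1 / (Fintype.card F : ℝ) ^ 12) * ∏ i : Fin 9, (if e i then 1 - p else p)
    else 0)
    = (1 / (Fintype.card F : ℝ) ^ 12) * ∏ i : Fin 9, (if e i then 1 - p else p)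
      - FV2 v * GE2 F p e := by
  have hW : (∏ i : Fin 9, (if e i then 1 - p else p)) =
      Wb p (e 0) * Wb p (e 1) * Wb p (e 2) * Wb p (e 3) * Wb p (e 4) * Wb p (e 5) *
        Wb p (e 6) * Wb p (e 7) * Wb p (e 8) := prod_univ_nine _
  have hflip : (v 1 * v 2 - v 0 * v 3 ≠ 0) ↔ (v 0 * v 3 - v 1 * v 2 ≠ 0) := by
    rw [sub_ne_zero, sub_ne_zero]
    exact ne_comm
  have hU : IsUnit (Ft2t (v 0) (v 1) (v 2) (v 3) (v 5) (v 8) (v 11) (v 6) (v 9) (v 7)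
      (e 0) (e 1) (e 3) (e 4) (e 5) (e 6) (e 8)) ↔
      ((e 0 = true ∧ e 1 = true ∧ e 3 = true ∧ e 5 = true ∧ e 6 = true ∧ e 8 = true) ∧
        (v 0 * v 3 - v 1 * v 2 ≠ 0 ∧ (v 5 ≠ 0 ∧ (v 7 ≠ 0 ∧ (v 8 ≠ 0 ∧ v 11 ≠ 0))))) := by
    rw [Matrix.isUnit_iff_isUnit_det, det_t2, isUnit_iff_ne_zero]
    by_cases hc : (e 0 = true ∧ e 1 = true ∧ e 3 = true ∧ e 5 = true ∧ e 6 = true ∧ e 8 = true)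
    · simp only [hc, if_true, true_and, mul_ne_zero_iff, hflip]
      tauto
    · simp [hc]
  rw [hW, FV2_eq]
  simp only [GE2]
  rw [← bridge2 p e]
  simp only [hU]
  by_cases hc : (e 0 = true ∧ e 1 = true ∧ e 3 = true ∧ e 5 = true ∧ e 6 = true ∧ e 8 = true) <;>
    by_cases hv : (v 0 * v 3 - v 1 * v 2 ≠ 0 ∧ (v 5 ≠ 0 ∧ (v 7 ≠ 0 ∧ (v 8 ≠ 0 ∧ v 11 ≠ 0)))) <;>
    simp [hc, hv] <;> ring

/-! ### The two sink failure probabilities -/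

set_option maxHeartbeats 1000000 in
lemma PeT1_eq {F : Type*} [Field F] [Fintype F] (q : ℕ) (hq : Fintype.card F = q)
    (hq2 : 2 ≤ q) (p : ℝ) :
    PeT1 F p = 1 - ((q : ℝ) + 1) * ((q : ℝ) - 1) ^ 6 * (1 - p) ^ 6 / (q : ℝ) ^ 7 := by
  have hq0 : (q : ℝ) ≠ 0 := Nat.cast_ne_zero.mpr (by omega)
  have hsum : (∑ e : Fin 9 → Bool, ∏ i : Fin 9, (if e i then 1 - p else p)) = 1 :=
    (Finset.sum_congr rfl fun e _ => prod_univ_nine _).trans (sumE_all p)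
  have hT : (∑ e : Fin 9 → Bool,
      (1 / (Fintype.card F : ℝ) ^ 12) * ∏ i : Fin 9, (if e i then 1 - p else p)) =
      (1 / (Fintype.card F : ℝ) ^ 12) := by
    rw [← Finset.mul_sum, hsum, mul_one]
  have hFV : (∑ v : Fin 12 → F, FV1 v) =
      (Fintype.card F : ℝ) ^ 5 * ((Fintype.card F : ℝ) + 1) * ((Fintype.card F : ℝ) - 1) ^ 6 := by
    rw [sum_pi12 FV1]
    exact SV1
  have hGE : (∑ e : Fin 9 → Bool, GE1 F p e) =
      (1 / (Fintype.card F : ℝ) ^ 12) * (1 - p) ^ 6 := by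
    simp only [GE1]
    rw [← Finset.mul_sum, sumE_t1]
  unfold PeT1
  rw [Finset.sum_congr rfl fun v _ => Finset.sum_congr rfl fun e _ => pw1 p v e]
  simp only [Finset.sum_sub_distrib]
  rw [show (∑ v : Fin 12 → F, ∑ e : Fin 9 → Bool, FV1 v * GE1 F p e)
      = (∑ v : Fin 12 → F, FV1 v) * (∑ e : Fin 9 → Bool, GE1 F p e) from
    (Finset.sum_mul_sum _ _ _ _).symm]
  rw [Finset.sum_congr rfl fun v (_ : v ∈ (Finset.univ : Finset (Fin 12 → F))) => hT]
  rw [Finset.sum_const, Finset.card_univ, nsmul_eq_mul, Fintype.card_fun, Fintype.card_fin,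
    Nat.cast_pow, hFV, hGE, hq]
  field_simp

set_option maxHeartbeats 1000000 in
lemma PeT2_eq {F : Type*} [Field F] [Fintype F] (q : ℕ) (hq : Fintype.card F = q)
    (hq2 : 2 ≤ q) (p : ℝ) :
    PeT2 F p = 1 - ((q : ℝ) + 1) * ((q : ℝ) - 1) ^ 6 * (1 - p) ^ 6 / (q : ℝ) ^ 7 := by
  have hq0 : (q : ℝ) ≠ 0 := Nat.cast_ne_zero.mpr (by omega)
  have hsum : (∑ e : Fin 9 → Bool, ∏ i : Fin 9, (if e i then 1 - p else p)) = 1 :=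
    (Finset.sum_congr rfl fun e _ => prod_univ_nine _).trans (sumE_all p)
  have hT : (∑ e : Fin 9 → Bool,
      (1 / (Fintype.card F : ℝ) ^ 12) * ∏ i : Fin 9, (if e i then 1 - p else p)) =
      (1 / (Fintype.card F : ℝ) ^ 12) := by
    rw [← Finset.mul_sum, hsum, mul_one]
  have hFV : (∑ v : Fin 12 → F, FV2 v) =
      (Fintype.card F : ℝ) ^ 5 * ((Fintype.card F : ℝ) + 1) * ((Fintype.card F : ℝ) - 1) ^ 6 := by
    rw [sum_pi12 FV2]
    exact SV2
  have hGE : (∑ e : Fin 9 → Bool, GE2 F p e) =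
      (1 / (Fintype.card F : ℝ) ^ 12) * (1 - p) ^ 6 := by
    simp only [GE2]
    rw [← Finset.mul_sum, sumE_t2]
  unfold PeT2
  rw [Finset.sum_congr rfl fun v _ => Finset.sum_congr rfl fun e _ => pw2 p v e]
  simp only [Finset.sum_sub_distrib]
  rw [show (∑ v : Fin 12 → F, ∑ e : Fin 9 → Bool, FV2 v * GE2 F p e)
      = (∑ v : Fin 12 → F, FV2 v) * (∑ e : Fin 9 → Bool, GE2 F p e) from
    (Finset.sum_mul_sum _ _ _ _).symm]
  rw [Finset.sum_congr rfl fun v (_ : v ∈ (Finset.univ : Finset (Fin 12 → F))) => hT]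
  rw [Finset.sum_const, Finset.card_univ, nsmul_eq_mul, Fintype.card_fun, Fintype.card_fin,
    Nat.cast_pow, hFV, hGE, hq]
  field_simp

/- STATEMENT 10: with `q = |F| ≥ 2` and channel failure probability `p ∈ [0,1]`, the
two sink failure probabilities coincide, and the average failure probability equals
this common value: `P̃_av = (P̃_e(t1) + P̃_e(t2))/2 = 1 - (q+1)(q-1)^6(1-p)^6/q^7`. -/
theorem butterfly_erased_average_failure_probability
    (F : Type*) [Field F] [Fintype F] (q : ℕ) (hq : Fintype.card F = q) (hq2 : 2 ≤ q)
    (p : ℝ) (hp : p ∈ Set.Icc (0 : ℝ) 1) :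
    PeT1 F p = PeT2 F p ∧
    (PeT1 F p + PeT2 F p) / 2 =
      1 - ((q : ℝ) + 1) * ((q : ℝ) - 1) ^ 6 * (1 - p) ^ 6 / (q : ℝ) ^ 7 ∧
    PeT1 F p = 1 - ((q : ℝ) + 1) * ((q : ℝ) - 1) ^ 6 * (1 - p) ^ 6 / (q : ℝ) ^ 7 := by
  refine ⟨(PeT1_eq q hq hq2 p).trans (PeT2_eq q hq hq2 p).symm, ?_, PeT1_eq q hq hq2 p⟩
  rw [PeT1_eq q hq hq2 p, PeT2_eq q hq hq2 p]
  ring
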